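/- For every integer n ≥ 1 and every real t with 0 ≤ t ≤ n, setting p = n − t, one has G_n(t) ≤ (2πn)^{−1/2}·exp(−p²/(2n)). -/

import Mathlib

open Real

/-- The Poisson weights `G_n(t) = tⁿ e^{-t}/n!` for `n ≥ 0`, and `0` for `n < 0`. -/
noncomputable def PoissonG (n : ℤ) (t : ℝ) : ℝ :=
  if 0 ≤ n then t ^ n.toNat * Real.exp (-t) / (n.toNat.factorial : ℝ) else 0

/-- Stirling lower bound: `√(2πn)·(n/e)^n ≤ n!` for `n ≥ 1`. -/
lemma stirling_lower (m : ℕ) (hm : 1 ≤ m) :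
    Real.sqrt (2 * Real.pi * m) * ((m : ℝ) / Real.exp 1) ^ m ≤ (m.factorial : ℝ) := by
  obtain ⟨k, rfl⟩ := Nat.exists_eq_add_of_le hm
  have hst : Real.sqrt Real.pi ≤ Stirling.stirlingSeq (1 + k) := by
    have htend : Filter.Tendsto (Stirling.stirlingSeq ∘ Nat.succ) Filter.atTop
        (nhds (Real.sqrt Real.pi)) :=
      Stirling.tendsto_stirlingSeq_sqrt_pi.comp (Filter.tendsto_add_atTop_nat 1)
    have := Stirling.stirlingSeq'_antitone.le_of_tendsto htend k
    simpa [Function.comp, Nat.succ_eq_add_one, add_comm] using this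
  have hpos : (0:ℝ) < Real.sqrt (2 * (1 + k : ℕ)) * ((1 + k : ℕ) / Real.exp 1) ^ (1 + k) := by
    positivity
  have h := mul_le_mul_of_nonneg_right hst hpos.le
  rw [Stirling.stirlingSeq, div_mul_cancel₀ _ hpos.ne'] at h
  refine le_trans (le_of_eq ?_) h
  have h2 : 2 * Real.pi * ((1+k : ℕ) : ℝ) = Real.pi * (2 * ((1+k : ℕ) : ℝ)) := by ring
  rw [h2, Real.sqrt_mul Real.pi_pos.le, mul_assoc]

/-- `x + x²/2 ≤ -log (1 - x)` for `0 ≤ x < 1`. -/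
lemma key_log {x : ℝ} (hx0 : 0 ≤ x) (hx1 : x < 1) :
    x + x ^ 2 / 2 ≤ -Real.log (1 - x) := by
  have h1x : 0 < 1 - x := by linarith
  -- consider g y = -log(1-y) - y - y^2/2 on [0, x]
  set g : ℝ → ℝ := fun y => -Real.log (1 - y) - y - y ^ 2 / 2 with hg
  have hderiv : ∀ y ∈ Set.Ico (0:ℝ) 1, HasDerivAt g (1 / (1 - y) - 1 - y) y := by
    intro y hy
    have hy1 : (1:ℝ) - y ≠ 0 := by rw [Set.mem_Ico] at hy; nlinarith [hy.1, hy.2]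
    have h1 : HasDerivAt (fun y : ℝ => 1 - y) (-1) y := by
      simpa using (hasDerivAt_id y).const_sub 1
    have h2 : HasDerivAt (fun y : ℝ => Real.log (1 - y)) (-1 / (1 - y)) y :=
      h1.log hy1
    have h3 : HasDerivAt (fun y : ℝ => y ^ 2 / 2) y y := by
      simpa using (hasDerivAt_pow 2 y).div_const 2
    have := ((h2.neg.sub (hasDerivAt_id y)).sub h3)
    rw [show 1 / (1 - y) - 1 - y = -(-1 / (1 - y)) - 1 - y by ring]
    exact this
  have hmono : MonotoneOn g (Set.Icc 0 x) := by
    have hsub : Set.Icc (0:ℝ) x ⊆ Set.Ico (0:ℝ) 1 := fun y hy =>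
      ⟨hy.1, lt_of_le_of_lt hy.2 hx1⟩
    have hcont : ContinuousOn g (Set.Icc 0 x) := by
      apply ContinuousOn.sub (ContinuousOn.sub _ continuousOn_id)
        (Continuous.continuousOn (by continuity))
      apply ContinuousOn.neg
      apply ContinuousOn.log (continuousOn_const.sub continuousOn_id)
      intro y hy
      have := hsub hy
      rw [Set.mem_Ico] at this
      simp only [Pi.sub_apply, id_eq]
      intro hcontra
      nlinarith [this.1, this.2]
    apply monotoneOn_of_deriv_nonneg (convex_Icc 0 x) hcont
    · intro y hy
      rw [interior_Icc] at hy
      have hy' : y ∈ Set.Ico (0:ℝ) 1 := hsub ⟨hy.1.le, hy.2.le⟩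
      exact (hderiv y hy').differentiableAt.differentiableWithinAt
    · intro y hy
      rw [interior_Icc] at hy
      have hy' : y ∈ Set.Ico (0:ℝ) 1 := hsub ⟨hy.1.le, hy.2.le⟩
      rw [(hderiv y hy').deriv]
      rw [Set.mem_Ico] at hy'
      have h1y : 0 < 1 - y := by linarith [hy'.2]
      have heq : 1 / (1 - y) - 1 - y = y ^ 2 / (1 - y) := by field_simp; ring
      rw [heq]
      positivity
  have h0 : g 0 = 0 := by simp [hg]
  have := hmono (Set.left_mem_Icc.mpr hx0) (Set.right_mem_Icc.mpr hx0) hx0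
  rw [h0] at this
  simp only [hg] at this
  linarith

/-- Lemma 5 i): if `p = n - t ≥ 0` then `G_n(t) ≤ (2πn)^{-1/2}·exp(-p²/(2n))`. -/
theorem stmt_11 :
    ∀ n : ℤ, 1 ≤ n → ∀ t : ℝ, 0 ≤ t → t ≤ (n:ℝ) →
    ∀ p : ℝ, p = (n:ℝ) - t →
      PoissonG n t ≤ (1/Real.sqrt (2*Real.pi*(n:ℝ))) * Real.exp (-p^2/(2*(n:ℝ))) := by
  intro n hn t ht htn p hp
  have hn0 : (0:ℤ) ≤ n := le_trans zero_le_one hn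
  set m : ℕ := n.toNat with hm
  have hmn : (m : ℝ) = (n : ℝ) := by
    rw [hm]; exact_mod_cast congrArg (Int.cast : ℤ → ℝ) (Int.toNat_of_nonneg hn0)
  have hm1 : 1 ≤ m := by omega
  have hmpos : (0:ℝ) < m := by exact_mod_cast Nat.pos_of_ne_zero (by omega)
  rw [PoissonG, if_pos hn0, ← hm, ← hmn]
  rw [← hmn] at htn hp
  -- now goal: t ^ m * exp (-t) / m! ≤ 1/√(2πm) * exp (-p²/(2m))
  have hfact : Real.sqrt (2 * Real.pi * m) * ((m : ℝ) / Real.exp 1) ^ m ≤ (m.factorial : ℝ) :=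
    stirling_lower m hm1
  have hsq : (0:ℝ) < Real.sqrt (2 * Real.pi * m) := by positivity
  have hme : (0:ℝ) < ((m : ℝ) / Real.exp 1) ^ m := by positivity
  -- key inequality: t^m * exp(-t) ≤ (m/e)^m * exp(-p²/(2m))
  have key : t ^ m * Real.exp (-t) ≤ ((m : ℝ) / Real.exp 1) ^ m * Real.exp (-p ^ 2 / (2 * m)) := by
    rcases eq_or_lt_of_le ht with h0 | htpos
    · rw [← h0, zero_pow (by omega), zero_mul]
      positivity
    · -- take logs
      have hLpos : 0 < t ^ m * Real.exp (-t) := by positivity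
      have hRpos : 0 < ((m : ℝ) / Real.exp 1) ^ m * Real.exp (-p ^ 2 / (2 * m)) := by positivity
      rw [← Real.log_le_log_iff hLpos hRpos, Real.log_mul (by positivity) (Real.exp_ne_zero _),
        Real.log_mul (by positivity) (Real.exp_ne_zero _), Real.log_pow, Real.log_pow,
        Real.log_exp, Real.log_exp, Real.log_div (ne_of_gt hmpos) (Real.exp_ne_zero 1),
        Real.log_exp]
      -- goal: m * log t - t ≤ m * (log m - 1) + (-p²/(2m))
      set x : ℝ := p / m with hx
      have hx0 : 0 ≤ x := div_nonneg (by rw [hp]; linarith) hmpos.le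
      have hx1 : x < 1 := by
        rw [hx, div_lt_one hmpos, hp]; linarith
      have hxt : t = (1 - x) * m := by
        rw [hx, hp, sub_mul, div_mul_cancel₀ _ hmpos.ne']; ring
      have hlog := key_log hx0 hx1
      have h1x : (0:ℝ) < 1 - x := by linarith
      have hlogt : Real.log t = Real.log (1 - x) + Real.log m := by
        rw [hxt, Real.log_mul (ne_of_gt h1x) (ne_of_gt hmpos)]
      rw [hlogt, hxt]
      have hpx : p = x * m := by rw [hx, div_mul_cancel₀ _ hmpos.ne']
      rw [hpx]
      have h2 : (x * m) ^ 2 / (2 * m) = m * (x ^ 2 / 2) := by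
        field_simp
      rw [neg_div, h2]
      have := mul_le_mul_of_nonneg_left hlog hmpos.le
      nlinarith [this]
  -- combine
  have h1 : t ^ m * Real.exp (-t) / (m.factorial : ℝ) ≤
      t ^ m * Real.exp (-t) / (Real.sqrt (2 * Real.pi * m) * ((m : ℝ) / Real.exp 1) ^ m) := by
    apply div_le_div_of_nonneg_left (by positivity) (by positivity) hfact
  refine h1.trans ?_
  rw [div_le_iff₀ (by positivity)]
  refine key.trans (le_of_eq ?_)
  field_simp
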